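/- If the null p-values are independent of each other and of the non-null p-values, each null p-value is super-uniform (P(P_j ≤ u) ≤ u for all u ∈ [0,1]), both sequences {α_t} and {λ_t} are monotone, and FDP̂_λ(t) ≤ α almost surely for all t ∈ ℕ, then FDR(t) ≤ α for all t ∈ ℕ. (Theorem 1(d)) -/

import Mathlib

open MeasureTheory ProbabilityTheory

/-- The rejection-and-candidacy indicator history available just before testing hypothesis `t`:
the pair of indicators `R_j = 1{P_j ≤ α_j}` and `C_j = 1{P_j ≤ λ_j}` for `j < t`,
encoded as a pair of boolean sequences. -/
noncomputable def history {Ω : Type*} (P alpha lam : ℕ → Ω → ℝ) (t : ℕ) (ω : Ω) :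
    (ℕ → Bool) × (ℕ → Bool) :=
  (fun j => decide (j < t ∧ P j ω ≤ alpha j ω), fun j => decide (j < t ∧ P j ω ≤ lam j ω))

/-- The number of rejections `|R(t)|` among the hypotheses indexed `j ≤ t`. -/
noncomputable def numRejections {Ω : Type*} (P alpha : ℕ → Ω → ℝ) (t : ℕ) (ω : Ω) : ℝ :=
  ∑ j ∈ Finset.Iic t, if P j ω ≤ alpha j ω then (1 : ℝ) else 0

open Classical in
/-- The number of false rejections `|H⁰ ∩ R(t)|` among the hypotheses indexed `j ≤ t`. -/
noncomputable def numFalseRejections {Ω : Type*} (H0 : Set ℕ) (P alpha : ℕ → Ω → ℝ)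
    (t : ℕ) (ω : Ω) : ℝ :=
  ∑ j ∈ Finset.Iic t, if j ∈ H0 ∧ P j ω ≤ alpha j ω then (1 : ℝ) else 0

/-- The false discovery proportion `FDP(t) = |H⁰ ∩ R(t)| / max(|R(t)|, 1)`. -/
noncomputable def FDP {Ω : Type*} (H0 : Set ℕ) (P alpha : ℕ → Ω → ℝ) (t : ℕ) (ω : Ω) : ℝ :=
  numFalseRejections H0 P alpha t ω / max (numRejections P alpha t ω) 1

/-- The SAFFRON FDP estimate
`FDP̂_λ(t) = (Σ_{j ≤ t} α_j · 1{P_j > λ_j}/(1 − λ_j)) / max(|R(t)|, 1)`. -/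
noncomputable def FDPhatSaffron {Ω : Type*} (P alpha lam : ℕ → Ω → ℝ) (t : ℕ) (ω : Ω) : ℝ :=
  (∑ j ∈ Finset.Iic t, alpha j ω * (if lam j ω < P j ω then (1 : ℝ) else 0) / (1 - lam j ω))
    / max (numRejections P alpha t ω) 1

/-- The null p-values `{P_j : j ∈ H⁰}` are independent of each other and of
the non-null p-values: the family of σ-algebras consisting of `σ(P_j)` for each null `j`,
together with the σ-algebra generated by all non-null p-values, is independent. -/
def nullsIndep {Ω : Type*} [MeasurableSpace Ω] (μ : Measure Ω) (H0 : Set ℕ)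
    (P : ℕ → Ω → ℝ) : Prop :=
  ProbabilityTheory.iIndep
    (fun i : Option {j : ℕ // j ∈ H0} =>
      i.elim (⨆ j ∈ H0ᶜ, MeasurableSpace.comap (P j) inferInstance)
        (fun j => MeasurableSpace.comap (P j.1) inferInstance)) μ

namespace Thm1d

variable {Ω : Type*}

set_option linter.unusedVariables false in
noncomputable def lvl (f g : ℕ → (ℕ → Bool) × (ℕ → Bool) → ℝ) (Q : ℕ → Ω → ℝ) :
    ℕ → Ω → ℝ × ℝ
  | i, ω =>
    (f i (fun k => if h : k < i then decide (Q k ω ≤ (lvl f g Q k ω).1) else false,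
          fun k => if h : k < i then decide (Q k ω ≤ (lvl f g Q k ω).2) else false),
     g i (fun k => if h : k < i then decide (Q k ω ≤ (lvl f g Q k ω).1) else false,
          fun k => if h : k < i then decide (Q k ω ≤ (lvl f g Q k ω).2) else false))
  termination_by i => i
  decreasing_by all_goals exact h

noncomputable def hst (f g : ℕ → (ℕ → Bool) × (ℕ → Bool) → ℝ) (Q : ℕ → Ω → ℝ) (i : ℕ) (ω : Ω) :
    (ℕ → Bool) × (ℕ → Bool) :=
  (fun k => decide (k < i ∧ Q k ω ≤ (lvl f g Q k ω).1),
   fun k => decide (k < i ∧ Q k ω ≤ (lvl f g Q k ω).2))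

lemma lvl_eq (f g : ℕ → (ℕ → Bool) × (ℕ → Bool) → ℝ) (Q : ℕ → Ω → ℝ) (i : ℕ) (ω : Ω) :
    lvl f g Q i ω = (f i (hst f g Q i ω), g i (hst f g Q i ω)) := by
  have key : ∀ c : ℕ → ℝ, (fun k => if _ : k < i then decide (Q k ω ≤ c k) else false)
      = fun k => decide (k < i ∧ Q k ω ≤ c k) := by
    intro c; funext k; by_cases h : k < i <;> simp [h]
  rw [lvl]
  unfold hst
  rw [key, key]

variable {f g : ℕ → (ℕ → Bool) × (ℕ → Bool) → ℝ}

/-- the count of rejections for the process driven by `Q`. -/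
noncomputable def cnt (f g : ℕ → (ℕ → Bool) × (ℕ → Bool) → ℝ) (Q : ℕ → Ω → ℝ) (t : ℕ)
    (ω : Ω) : ℝ :=
  ∑ k ∈ Finset.Iic t, if Q k ω ≤ (lvl f g Q k ω).1 then (1 : ℝ) else 0

/-- `lvl` at `i` depends only on the coordinates `< i`. -/
lemma lvl_congr {Q1 Q2 : ℕ → Ω → ℝ} {ω : Ω} :
    ∀ i, (∀ k < i, Q1 k ω = Q2 k ω) → lvl f g Q1 i ω = lvl f g Q2 i ω := by
  intro i
  induction i using Nat.strong_induction_on with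
  | _ i IH =>
    intro h
    have hh : hst f g Q1 i ω = hst f g Q2 i ω := by
      unfold hst
      refine Prod.ext ?_ ?_ <;> · funext k
                                  dsimp only
                                  by_cases hk : k < i
                                  · rw [h k hk, IH k hk (fun m hm => h m (hm.trans hk))]
                                  · simp [hk]
    rw [lvl_eq, lvl_eq, hh]

/-- agreement of the whole process when the two drivers differ only in coordinate `j`
and give the same indicators at `j`. -/
lemma lvl_congr_event {Q1 Q2 : ℕ → Ω → ℝ} {ω : Ω} {j : ℕ}
    (hne : ∀ k, k ≠ j → Q1 k ω = Q2 k ω)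
    (h1 : (Q1 j ω ≤ (lvl f g Q1 j ω).1) ↔ (Q2 j ω ≤ (lvl f g Q2 j ω).1))
    (h2 : (Q1 j ω ≤ (lvl f g Q1 j ω).2) ↔ (Q2 j ω ≤ (lvl f g Q2 j ω).2)) :
    ∀ i, lvl f g Q1 i ω = lvl f g Q2 i ω := by
  intro i
  induction i using Nat.strong_induction_on with
  | _ i IH =>
    have hh : hst f g Q1 i ω = hst f g Q2 i ω := by
      unfold hst
      have coord : ∀ k, k < i →
          ((Q1 k ω ≤ (lvl f g Q1 k ω).1) ↔ (Q2 k ω ≤ (lvl f g Q2 k ω).1)) ∧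
          ((Q1 k ω ≤ (lvl f g Q1 k ω).2) ↔ (Q2 k ω ≤ (lvl f g Q2 k ω).2)) := by
        intro k hk
        by_cases hkj : k = j
        · subst hkj; exact ⟨h1, h2⟩
        · rw [hne k hkj, IH k hk]; exact ⟨Iff.rfl, Iff.rfl⟩
      refine Prod.ext ?_ ?_ <;> · funext k
                                  dsimp only
                                  by_cases hk : k < i
                                  · simp only [hk, true_and]
                                    first
                                      | exact decide_eq_decide.mpr (coord k hk).1
                                      | exact decide_eq_decide.mpr (coord k hk).2
                                  · simp [hk]
    rw [lvl_eq, lvl_eq, hh]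

lemma cnt_congr_event {Q1 Q2 : ℕ → Ω → ℝ} {ω : Ω} {j : ℕ}
    (hne : ∀ k, k ≠ j → Q1 k ω = Q2 k ω)
    (h1 : (Q1 j ω ≤ (lvl f g Q1 j ω).1) ↔ (Q2 j ω ≤ (lvl f g Q2 j ω).1))
    (h2 : (Q1 j ω ≤ (lvl f g Q1 j ω).2) ↔ (Q2 j ω ≤ (lvl f g Q2 j ω).2))
    (t : ℕ) : cnt f g Q1 t ω = cnt f g Q2 t ω := by
  unfold cnt
  refine Finset.sum_congr rfl (fun k _ => ?_)
  refine if_congr ?_ rfl rfl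
  by_cases hkj : k = j
  · subst hkj; exact h1
  · rw [hne k hkj, lvl_congr_event hne h1 h2 k]

lemma decide_le_decide' {p q : Prop} [Decidable p] [Decidable q] (h : p → q) :
    decide p ≤ decide q := by
  by_cases hp : p
  · simp [hp, h hp]
  · simp [hp]

/-- monotone comparison: smaller p-values give (coordinatewise) larger histories and levels. -/
lemma lvl_mono {Q1 Q2 : ℕ → Ω → ℝ} {ω : Ω}
    (hf : ∀ t, Monotone (f t)) (hg : ∀ t, Monotone (g t))
    (hQ : ∀ k, Q2 k ω ≤ Q1 k ω) :
    ∀ i, (lvl f g Q1 i ω).1 ≤ (lvl f g Q2 i ω).1 ∧ (lvl f g Q1 i ω).2 ≤ (lvl f g Q2 i ω).2 := by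
  intro i
  induction i using Nat.strong_induction_on with
  | _ i IH =>
    have hh : hst f g Q1 i ω ≤ hst f g Q2 i ω := by
      unfold hst
      refine Prod.mk_le_mk.2 ⟨?_, ?_⟩ <;> · intro k
                                            by_cases hk : k < i
                                            · refine decide_le_decide' (fun hx => ?_)
                                              refine ⟨hx.1, le_trans (hQ k) (le_trans hx.2 ?_)⟩
                                              first
                                                | exact (IH k hk).1
                                                | exact (IH k hk).2
                                            · simp [hk]
    rw [lvl_eq, lvl_eq]
    exact ⟨hf i hh, hg i hh⟩

lemma cnt_mono {Q1 Q2 : ℕ → Ω → ℝ} {ω : Ω}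
    (hf : ∀ t, Monotone (f t)) (hg : ∀ t, Monotone (g t))
    (hQ : ∀ k, Q2 k ω ≤ Q1 k ω) (t : ℕ) :
    cnt f g Q1 t ω ≤ cnt f g Q2 t ω := by
  unfold cnt
  refine Finset.sum_le_sum (fun k _ => ?_)
  by_cases h1 : Q1 k ω ≤ (lvl f g Q1 k ω).1
  · have h2 : Q2 k ω ≤ (lvl f g Q2 k ω).1 :=
      le_trans (hQ k) (le_trans h1 (lvl_mono hf hg hQ k).1)
    simp [h1, h2]
  · have : (0:ℝ) ≤ if Q2 k ω ≤ (lvl f g Q2 k ω).1 then (1:ℝ) else 0 := by positivity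
    simpa [h1] using this





/-- A function with finite range whose fibers are `m'`-measurable. -/
def SimpleOn (m' : MeasurableSpace Ω) {γ : Type*} (X : Ω → γ) : Prop :=
  (Set.range X).Finite ∧ ∀ v, MeasurableSet[m'] {ω | X ω = v}

variable {m' : MeasurableSpace Ω} {γ δ : Type*}

lemma SimpleOn.comp {X : Ω → γ} (h : SimpleOn m' X) (φ : γ → δ) :
    SimpleOn m' (fun ω => φ (X ω)) := by
  constructor
  · have : Set.range (fun ω => φ (X ω)) ⊆ φ '' Set.range X := by
      rintro _ ⟨ω, rfl⟩; exact ⟨X ω, ⟨ω, rfl⟩, rfl⟩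
    exact (h.1.image φ).subset this
  · intro v
    have : {ω | φ (X ω) = v} = ⋃ u ∈ {u ∈ Set.range X | φ u = v}, {ω | X ω = u} := by
      ext ω
      simp only [Set.mem_setOf_eq, Set.mem_iUnion, Set.mem_sep_iff, Set.mem_range]
      constructor
      · intro hv; exact ⟨X ω, ⟨⟨ω, rfl⟩, hv⟩, rfl⟩
      · rintro ⟨u, ⟨_, hu⟩, rfl⟩; exact hu
    rw [this]
    exact MeasurableSet.biUnion (h.1.subset (Set.sep_subset _ _)).countable
      (fun u _ => h.2 u)

lemma SimpleOn.measurable [MeasurableSpace γ] {X : Ω → γ} (h : SimpleOn m' X) :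
    Measurable[m'] X := by
  intro s _
  have : X ⁻¹' s = ⋃ u ∈ {u ∈ Set.range X | u ∈ s}, {ω | X ω = u} := by
    ext ω
    simp only [Set.mem_preimage, Set.mem_iUnion, Set.mem_sep_iff, Set.mem_range]
    constructor
    · intro hv; exact ⟨X ω, ⟨⟨ω, rfl⟩, hv⟩, rfl⟩
    · rintro ⟨u, ⟨_, hu⟩, rfl⟩; exact hu
  rw [this]
  exact MeasurableSet.biUnion (h.1.subset (Set.sep_subset _ _)).countable (fun u _ => h.2 u)

lemma SimpleOn.prodMk {X : Ω → γ} {Y : Ω → δ} (hX : SimpleOn m' X) (hY : SimpleOn m' Y) :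
    SimpleOn m' (fun ω => (X ω, Y ω)) := by
  constructor
  · have : Set.range (fun ω => (X ω, Y ω)) ⊆ Set.range X ×ˢ Set.range Y := by
      rintro _ ⟨ω, rfl⟩; exact ⟨⟨ω, rfl⟩, ⟨ω, rfl⟩⟩
    exact (hX.1.prod hY.1).subset this
  · intro v
    have : {ω | (X ω, Y ω) = v} = {ω | X ω = v.1} ∩ {ω | Y ω = v.2} := by
      ext ω; simp [Prod.ext_iff]
    rw [this]
    exact (hX.2 v.1).inter (hY.2 v.2)

lemma simpleOn_const (c : γ) : SimpleOn m' (fun _ : Ω => c) := by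
  constructor
  · exact (Set.finite_singleton c).subset (by rintro _ ⟨ω, rfl⟩; simp)
  · intro v
    by_cases h : c = v
    · simp only [h, Set.setOf_true]; exact MeasurableSet.univ
    · simp only [h, Set.setOf_false]; exact MeasurableSet.empty

lemma simpleOn_decide {p : Ω → Prop} [∀ ω, Decidable (p ω)]
    (h : MeasurableSet[m'] {ω | p ω}) : SimpleOn m' (fun ω => decide (p ω)) := by
  constructor
  · exact Set.finite_univ.subset (Set.subset_univ _)
  · intro v
    cases v
    · have : {ω | decide (p ω) = false} = {ω | p ω}ᶜ := by
        ext ω; simp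
      rw [this]; exact h.compl
    · have : {ω | decide (p ω) = true} = {ω | p ω} := by
        ext ω; simp
      rw [this]; exact h

lemma simpleOn_pi {n : ℕ} {β : Fin n → Ω → Bool} (hβ : ∀ k, SimpleOn m' (β k)) :
    SimpleOn m' (fun ω (k : Fin n) => β k ω) := by
  constructor
  · exact Set.toFinite _
  · intro v
    have : {ω | (fun k => β k ω) = v} = ⋂ k, {ω | β k ω = v k} := by
      ext ω; simp [funext_iff]
    rw [this]
    exact MeasurableSet.iInter (fun k => (hβ k).2 (v k))

lemma measurableSet_le_simple {A X : Ω → ℝ} (hA : SimpleOn m' A) (hX : Measurable[m'] X) :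
    MeasurableSet[m'] {ω | X ω ≤ A ω} := by
  have : {ω | X ω ≤ A ω} = ⋃ a ∈ Set.range A, ({ω | A ω = a} ∩ X ⁻¹' Set.Iic a) := by
    ext ω
    simp only [Set.mem_setOf_eq, Set.mem_iUnion, Set.mem_range, Set.mem_inter_iff,
      Set.mem_preimage, Set.mem_Iic]
    constructor
    · intro hle; exact ⟨A ω, ⟨ω, rfl⟩, rfl, hle⟩
    · rintro ⟨a, _, rfl, hle⟩; exact hle
  rw [this]
  exact MeasurableSet.biUnion hA.1.countable
    (fun a _ => (hA.2 a).inter (hX measurableSet_Iic))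

lemma simpleOn_finset_sum {κ : Type*} (s : Finset κ) (F : κ → Ω → ℝ)
    (h : ∀ k ∈ s, SimpleOn m' (F k)) : SimpleOn m' (fun ω => ∑ k ∈ s, F k ω) := by
  classical
  induction s using Finset.induction with
  | empty => simpa using simpleOn_const (0:ℝ)
  | insert a s' hk IH =>
    simp only [Finset.sum_insert hk]
    exact ((h a (Finset.mem_insert_self a s')).prodMk
      (IH (fun k hks => h k (Finset.mem_insert_of_mem hks)))).comp (fun p => p.1 + p.2)



section Simple

variable {m' : MeasurableSpace Ω}

lemma simpleOn_lvl (m' : MeasurableSpace Ω) (Q : ℕ → Ω → ℝ)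
    (hQ : ∀ k, Measurable[m'] (Q k)) :
    ∀ i, SimpleOn m' (lvl f g Q i) := by
  intro i
  induction i using Nat.strong_induction_on with
  | _ i IH =>
    -- the boolean indicator at each k < i is simple
    have hβ1 : ∀ k, k < i → SimpleOn m' (fun ω => decide (Q k ω ≤ (lvl f g Q k ω).1)) :=
      fun k hk => simpleOn_decide (measurableSet_le_simple ((IH k hk).comp Prod.fst) (hQ k))
    have hβ2 : ∀ k, k < i → SimpleOn m' (fun ω => decide (Q k ω ≤ (lvl f g Q k ω).2)) :=
      fun k hk => simpleOn_decide (measurableSet_le_simple ((IH k hk).comp Prod.snd) (hQ k))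
    have hcomp : ∀ c : ℕ → Ω → ℝ,
        (∀ k, k < i → SimpleOn m' (fun ω => decide (Q k ω ≤ c k ω))) →
        SimpleOn m' (fun ω (k : ℕ) => decide (k < i ∧ Q k ω ≤ c k ω)) := by
      intro c hc
      have base : SimpleOn m' (fun ω (k : Fin i) => decide (Q k.1 ω ≤ c k.1 ω)) :=
        simpleOn_pi (fun k => hc k.1 k.2)
      have : (fun ω (k : ℕ) => decide (k < i ∧ Q k ω ≤ c k ω))
          = fun ω => (fun (v : Fin i → Bool) (k : ℕ) =>
              if h : k < i then v ⟨k, h⟩ else false)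
            (fun k : Fin i => decide (Q k.1 ω ≤ c k.1 ω)) := by
        funext ω k
        by_cases h : k < i <;> simp [h]
      rw [this]
      exact base.comp (fun (v : Fin i → Bool) (k : ℕ) => if h : k < i then v ⟨k, h⟩ else false)
    have h1 : SimpleOn m' (fun ω (k : ℕ) => decide (k < i ∧ Q k ω ≤ (lvl f g Q k ω).1)) :=
      hcomp _ hβ1
    have h2 : SimpleOn m' (fun ω (k : ℕ) => decide (k < i ∧ Q k ω ≤ (lvl f g Q k ω).2)) :=
      hcomp _ hβ2
    have hh : SimpleOn m' (hst f g Q i) := h1.prodMk h2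
    have : lvl f g Q i = fun ω => (f i (hst f g Q i ω), g i (hst f g Q i ω)) := by
      funext ω; exact lvl_eq f g Q i ω
    rw [this]
    exact (hh.comp (f i)).prodMk (hh.comp (g i))

lemma simpleOn_cnt (m' : MeasurableSpace Ω) (Q : ℕ → Ω → ℝ)
    (hQ : ∀ k, Measurable[m'] (Q k)) (t : ℕ) :
    SimpleOn m' (cnt f g Q t) := by
  have : cnt f g Q t = fun ω => ∑ k ∈ Finset.Iic t,
      (fun ω => if Q k ω ≤ (lvl f g Q k ω).1 then (1:ℝ) else 0) ω := by
    funext ω; rfl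
  rw [this]
  refine simpleOn_finset_sum _ _ (fun k _ => ?_)
  have hb : SimpleOn m' (fun ω => decide (Q k ω ≤ (lvl f g Q k ω).1)) :=
    simpleOn_decide (measurableSet_le_simple ((simpleOn_lvl m' Q hQ k).comp Prod.fst) (hQ k))
  have : (fun ω => if Q k ω ≤ (lvl f g Q k ω).1 then (1:ℝ) else 0)
      = fun ω => (fun b : Bool => if b then (1:ℝ) else 0)
          (decide (Q k ω ≤ (lvl f g Q k ω).1)) := by
    funext ω
    by_cases h : Q k ω ≤ (lvl f g Q k ω).1 <;> simp [h]
  rw [this]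
  exact hb.comp (fun b : Bool => if b then (1:ℝ) else 0)

end Simple


section Key

variable [m0 : MeasurableSpace Ω] {μ : Measure Ω} [IsProbabilityMeasure μ] {X : Ω → ℝ}


lemma keyA {m' : MeasurableSpace Ω} (hm' : m' ≤ m0) (hX : Measurable[m0] X)
    (hind : ∀ (c : ℝ) (S : Set Ω), MeasurableSet[m'] S →
      μ ({ω | X ω ≤ c} ∩ S) = μ {ω | X ω ≤ c} * μ S)
    (hsup : ∀ u ∈ Set.Icc (0:ℝ) 1, μ {ω | X ω ≤ u} ≤ ENNReal.ofReal u)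
    (B W : Ω → ℝ) (hBW : SimpleOn m' (fun ω => (B ω, W ω)))
    (hB : ∀ ω, B ω ∈ Set.Icc (0:ℝ) 1) (hW : ∀ ω, 0 ≤ W ω) :
    ∫⁻ ω, ENNReal.ofReal ((if X ω ≤ B ω then (1:ℝ) else 0) * W ω) ∂μ
      ≤ ∫⁻ ω, ENNReal.ofReal (B ω * W ω) ∂μ := by
  classical
  set T : Ω → ℝ × ℝ := fun ω => (B ω, W ω) with hT
  set s : Finset (ℝ × ℝ) := hBW.1.toFinset with hs
  have hTs : ∀ ω, T ω ∈ s := fun ω => hBW.1.mem_toFinset.2 ⟨ω, rfl⟩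
  have hfib : ∀ v, MeasurableSet[m0] {ω | T ω = v} := fun v => hm' _ (hBW.2 v)
  have hle : ∀ c : ℝ, MeasurableSet[m0] {ω | X ω ≤ c} := fun c => hX measurableSet_Iic
  have hL : ∫⁻ ω, ENNReal.ofReal ((if X ω ≤ B ω then (1:ℝ) else 0) * W ω) ∂μ
      = ∑ v ∈ s, ENNReal.ofReal v.2 * μ ({ω | X ω ≤ v.1} ∩ {ω | T ω = v}) := by
    have hfun : (fun ω => ENNReal.ofReal ((if X ω ≤ B ω then (1:ℝ) else 0) * W ω))
        = fun ω => ∑ v ∈ s, ({ω | X ω ≤ v.1} ∩ {ω | T ω = v}).indicator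
            (fun _ => ENNReal.ofReal v.2) ω := by
      funext ω
      rw [Finset.sum_eq_single_of_mem (T ω) (hTs ω)]
      · by_cases hc : X ω ≤ B ω
        · have hmem : ω ∈ {x | X x ≤ (T ω).1} ∩ {x | T x = T ω} := ⟨hc, rfl⟩
          rw [Set.indicator_of_mem hmem, if_pos hc, one_mul]
        · have hmem : ω ∉ {x | X x ≤ (T ω).1} ∩ {x | T x = T ω} := fun hmem => hc hmem.1
          rw [Set.indicator_of_notMem hmem, if_neg hc, zero_mul, ENNReal.ofReal_zero]
      · intro v _ hv
        exact Set.indicator_of_notMem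
          (fun (hmem : ω ∈ {x | X x ≤ v.1} ∩ {x | T x = v}) => hv (hmem.2 ▸ rfl)) _
    rw [hfun, lintegral_finset_sum]
    · exact Finset.sum_congr rfl (fun v _ =>
        lintegral_indicator_const ((hle v.1).inter (hfib v)) _)
    · exact fun v _ => measurable_const.indicator ((hle v.1).inter (hfib v))
  have hR : ∫⁻ ω, ENNReal.ofReal (B ω * W ω) ∂μ
      = ∑ v ∈ s, ENNReal.ofReal (v.1 * v.2) * μ {ω | T ω = v} := by
    have hfun : (fun ω => ENNReal.ofReal (B ω * W ω))
        = fun ω => ∑ v ∈ s, ({ω | T ω = v}).indicator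
            (fun _ => ENNReal.ofReal (v.1 * v.2)) ω := by
      funext ω
      rw [Finset.sum_eq_single_of_mem (T ω) (hTs ω)]
      · rw [Set.indicator_of_mem (show ω ∈ {ω' | T ω' = T ω} from rfl)]
      · intro v _ hv
        exact Set.indicator_of_notMem
          (fun (hmem : ω ∈ {x | T x = v}) => hv (hmem ▸ rfl)) _
    rw [hfun, lintegral_finset_sum]
    · exact Finset.sum_congr rfl (fun v _ => lintegral_indicator_const (hfib v) _)
    · exact fun v _ => measurable_const.indicator (hfib v)
  rw [hL, hR]
  refine Finset.sum_le_sum (fun v hv => ?_)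
  obtain ⟨ω0, hω0⟩ := hBW.1.mem_toFinset.1 hv
  have hv1 : v.1 ∈ Set.Icc (0:ℝ) 1 := by rw [← hω0]; exact hB ω0
  have hv2 : (0:ℝ) ≤ v.2 := by rw [← hω0]; exact hW ω0
  rw [hind v.1 _ (hBW.2 v)]
  calc ENNReal.ofReal v.2 * (μ {ω | X ω ≤ v.1} * μ {ω | T ω = v})
      ≤ ENNReal.ofReal v.2 * (ENNReal.ofReal v.1 * μ {ω | T ω = v}) := by
        gcongr; exact hsup v.1 hv1
    _ = ENNReal.ofReal (v.1 * v.2) * μ {ω | T ω = v} := by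
        rw [ENNReal.ofReal_mul hv1.1, mul_comm (ENNReal.ofReal v.1) (ENNReal.ofReal v.2)]
        ring

lemma keyB {m' : MeasurableSpace Ω} (hm' : m' ≤ m0) (hX : Measurable[m0] X)
    (hind : ∀ (c : ℝ) (S : Set Ω), MeasurableSet[m'] S →
      μ ({ω | X ω ≤ c} ∩ S) = μ {ω | X ω ≤ c} * μ S)
    (hsup : ∀ u ∈ Set.Icc (0:ℝ) 1, μ {ω | X ω ≤ u} ≤ ENNReal.ofReal u)
    (A L W : Ω → ℝ) (hALW : SimpleOn m' (fun ω => (A ω, L ω, W ω)))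
    (hA : ∀ ω, 0 ≤ A ω) (hL : ∀ ω, L ω ∈ Set.Ico (0:ℝ) 1) (hW : ∀ ω, 0 ≤ W ω) :
    ∫⁻ ω, ENNReal.ofReal (A ω * W ω) ∂μ
      ≤ ∫⁻ ω, ENNReal.ofReal (A ω * (if L ω < X ω then (1:ℝ) else 0) / (1 - L ω) * W ω) ∂μ := by
  classical
  set T : Ω → ℝ × ℝ × ℝ := fun ω => (A ω, L ω, W ω) with hT
  set s : Finset (ℝ × ℝ × ℝ) := hALW.1.toFinset with hs
  have hTs : ∀ ω, T ω ∈ s := fun ω => hALW.1.mem_toFinset.2 ⟨ω, rfl⟩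
  have hfib : ∀ v, MeasurableSet[m0] {ω | T ω = v} := fun v => hm' _ (hALW.2 v)
  have hle : ∀ c : ℝ, MeasurableSet[m0] {ω | X ω ≤ c} := fun c => hX measurableSet_Iic
  have hgt : ∀ c : ℝ, MeasurableSet[m0] {ω | c < X ω} := by
    intro c
    have h : {ω | c < X ω} = {ω | X ω ≤ c}ᶜ := by ext ω; simp [not_le]
    rw [h]; exact (hle c).compl
  have hL1 : ∫⁻ ω, ENNReal.ofReal (A ω * W ω) ∂μ
      = ∑ v ∈ s, ENNReal.ofReal (v.1 * v.2.2) * μ {ω | T ω = v} := by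
    have hfun : (fun ω => ENNReal.ofReal (A ω * W ω))
        = fun ω => ∑ v ∈ s, ({ω | T ω = v}).indicator
            (fun _ => ENNReal.ofReal (v.1 * v.2.2)) ω := by
      funext ω
      rw [Finset.sum_eq_single_of_mem (T ω) (hTs ω)]
      · rw [Set.indicator_of_mem (show ω ∈ {ω' | T ω' = T ω} from rfl)]
      · intro v _ hv
        exact Set.indicator_of_notMem
          (fun (hmem : ω ∈ {x | T x = v}) => hv (hmem ▸ rfl)) _
    rw [hfun, lintegral_finset_sum]
    · exact Finset.sum_congr rfl (fun v _ => lintegral_indicator_const (hfib v) _)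
    · exact fun v _ => measurable_const.indicator (hfib v)
  have hR : ∫⁻ ω, ENNReal.ofReal (A ω * (if L ω < X ω then (1:ℝ) else 0) / (1 - L ω) * W ω) ∂μ
      = ∑ v ∈ s, ENNReal.ofReal (v.1 / (1 - v.2.1) * v.2.2)
          * μ ({ω | v.2.1 < X ω} ∩ {ω | T ω = v}) := by
    have hfun : (fun ω => ENNReal.ofReal (A ω * (if L ω < X ω then (1:ℝ) else 0) / (1 - L ω) * W ω))
        = fun ω => ∑ v ∈ s, ({ω | v.2.1 < X ω} ∩ {ω | T ω = v}).indicator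
            (fun _ => ENNReal.ofReal (v.1 / (1 - v.2.1) * v.2.2)) ω := by
      funext ω
      rw [Finset.sum_eq_single_of_mem (T ω) (hTs ω)]
      · by_cases hc : L ω < X ω
        · have hmem : ω ∈ {x | (T ω).2.1 < X x} ∩ {x | T x = T ω} := ⟨hc, rfl⟩
          rw [Set.indicator_of_mem hmem, if_pos hc]
          congr 1
          ring
        · have hmem : ω ∉ {x | (T ω).2.1 < X x} ∩ {x | T x = T ω} := fun hmem => hc hmem.1
          rw [Set.indicator_of_notMem hmem, if_neg hc]
          simp
      · intro v _ hv
        exact Set.indicator_of_notMem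
          (fun (hmem : ω ∈ {x | v.2.1 < X x} ∩ {x | T x = v}) => hv (hmem.2 ▸ rfl)) _
    rw [hfun, lintegral_finset_sum]
    · exact Finset.sum_congr rfl (fun v _ =>
        lintegral_indicator_const ((hgt v.2.1).inter (hfib v)) _)
    · exact fun v _ => measurable_const.indicator ((hgt v.2.1).inter (hfib v))
  rw [hL1, hR]
  refine Finset.sum_le_sum (fun v hv => ?_)
  obtain ⟨ω0, hω0⟩ := hALW.1.mem_toFinset.1 hv
  have hva : (0:ℝ) ≤ v.1 := by rw [← hω0]; exact hA ω0
  have hvl : v.2.1 ∈ Set.Ico (0:ℝ) 1 := by rw [← hω0]; exact hL ω0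
  have hvw : (0:ℝ) ≤ v.2.2 := by rw [← hω0]; exact hW ω0
  have hlt1 : (0:ℝ) < 1 - v.2.1 := by linarith [hvl.2]
  have hcompl : {ω | v.2.1 < X ω} ∩ {ω | T ω = v}
      = {ω | T ω = v} \ ({ω | X ω ≤ v.2.1} ∩ {ω | T ω = v}) := by
    ext ω
    simp only [Set.mem_inter_iff, Set.mem_diff, Set.mem_setOf_eq, not_and, not_le]
    constructor
    · rintro ⟨h1, h2⟩
      exact ⟨h2, fun hle => absurd hle (not_le.2 h1)⟩
    · rintro ⟨h2, h1⟩
      by_cases hle : X ω ≤ v.2.1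
      · exact absurd h2 (by simpa using h1 hle)
      · exact ⟨not_le.1 hle, h2⟩
  have hsub2 : MeasurableSet[m0] ({ω | X ω ≤ v.2.1} ∩ {ω | T ω = v}) :=
    (hle v.2.1).inter (hfib v)
  have hmeaseq : μ ({ω | v.2.1 < X ω} ∩ {ω | T ω = v})
      = μ {ω | T ω = v} - μ {ω | X ω ≤ v.2.1} * μ {ω | T ω = v} := by
    rw [hcompl,
      measure_diff Set.inter_subset_right hsub2.nullMeasurableSet (measure_ne_top μ _),
      hind v.2.1 _ (hALW.2 v)]
  rw [hmeaseq]
  have hsub : ENNReal.ofReal (1 - v.2.1) * μ {ω | T ω = v}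
      ≤ μ {ω | T ω = v} - μ {ω | X ω ≤ v.2.1} * μ {ω | T ω = v} := by
    have h1 : ENNReal.ofReal (1 - v.2.1) = 1 - ENNReal.ofReal v.2.1 := by
      rw [ENNReal.ofReal_sub 1 hvl.1, ENNReal.ofReal_one]
    rw [h1, ENNReal.sub_mul (fun _ _ => measure_ne_top μ _), one_mul]
    refine tsub_le_tsub_left ?_ _
    exact mul_le_mul_left (hsup v.2.1 ⟨hvl.1, hvl.2.le⟩) _
  calc ENNReal.ofReal (v.1 * v.2.2) * μ {ω | T ω = v}
      = ENNReal.ofReal (v.1 / (1 - v.2.1) * v.2.2)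
          * (ENNReal.ofReal (1 - v.2.1) * μ {ω | T ω = v}) := by
        rw [← mul_assoc, ← ENNReal.ofReal_mul (by positivity)]
        congr 2
        field_simp
    _ ≤ ENNReal.ofReal (v.1 / (1 - v.2.1) * v.2.2)
          * (μ {ω | T ω = v} - μ {ω | X ω ≤ v.2.1} * μ {ω | T ω = v}) := by
        gcongr



set_option linter.unusedSectionVars false in
set_option maxHeartbeats 1000000 in
lemma perJ (μ : Measure Ω) [IsProbabilityMeasure μ]
    (P alpha lam : ℕ → Ω → ℝ)
    (hfmono : ∀ t, Monotone (f t)) (hgmono : ∀ t, Monotone (g t))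
    (hcons : ∀ i ω, alpha i ω = (lvl f g P i ω).1 ∧ lam i ω = (lvl f g P i ω).2)
    (ha01 : ∀ j ω, alpha j ω ∈ Set.Ioo (0:ℝ) 1) (hl01 : ∀ j ω, lam j ω ∈ Set.Ioo (0:ℝ) 1)
    (halam : ∀ j ω, alpha j ω ≤ lam j ω)
    (j t : ℕ)
    (hPj : Measurable[m0] (P j))
    (hsup : ∀ u ∈ Set.Icc (0:ℝ) 1, μ {ω | P j ω ≤ u} ≤ ENNReal.ofReal u)
    (m' : MeasurableSpace Ω) (hm' : m' ≤ m0)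
    (hind : ∀ (c : ℝ) (S : Set Ω), MeasurableSet[m'] S →
      μ ({ω | P j ω ≤ c} ∩ S) = μ {ω | P j ω ≤ c} * μ S)
    (hPk : ∀ k, k ≠ j → Measurable[m'] (P k)) :
    ∫⁻ ω, ENNReal.ofReal ((if P j ω ≤ alpha j ω then (1:ℝ) else 0)
        / max (cnt f g P t ω) 1) ∂μ
      ≤ ∫⁻ ω, ENNReal.ofReal (alpha j ω * (if lam j ω < P j ω then (1:ℝ) else 0)
          / (1 - lam j ω) / max (cnt f g P t ω) 1) ∂μ := by
  classical
  set P0 : ℕ → Ω → ℝ := Function.update P j (fun _ => 0) with hP0def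
  set P1 : ℕ → Ω → ℝ := Function.update P j (fun _ => 2) with hP1def
  have hP0j : ∀ ω, P0 j ω = 0 := fun ω => by
    rw [hP0def, Function.update_self]
  have hP1j : ∀ ω, P1 j ω = 2 := fun ω => by
    rw [hP1def, Function.update_self]
  have hP0k : ∀ k, k ≠ j → P0 k = P k := fun k hk => by
    rw [hP0def, Function.update_of_ne hk]
  have hP1k : ∀ k, k ≠ j → P1 k = P k := fun k hk => by
    rw [hP1def, Function.update_of_ne hk]
  have hQ0 : ∀ k, Measurable[m'] (P0 k) := by
    intro k
    by_cases hk : k = j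
    · subst hk
      have h : P0 k = fun _ => (0:ℝ) := by rw [hP0def, Function.update_self]
      rw [h]; exact measurable_const
    · rw [hP0k k hk]; exact hPk k hk
  have hQ1 : ∀ k, Measurable[m'] (P1 k) := by
    intro k
    by_cases hk : k = j
    · subst hk
      have h : P1 k = fun _ => (2:ℝ) := by rw [hP1def, Function.update_self]
      rw [h]; exact measurable_const
    · rw [hP1k k hk]; exact hPk k hk
  have hlow0 : ∀ ω, lvl f g P j ω = lvl f g P0 j ω := fun ω =>
    lvl_congr j (fun k hk => (congrFun (hP0k k (Nat.ne_of_lt hk)) ω).symm)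
  have hlow1 : ∀ ω, lvl f g P j ω = lvl f g P1 j ω := fun ω =>
    lvl_congr j (fun k hk => (congrFun (hP1k k (Nat.ne_of_lt hk)) ω).symm)
  have haP0 : ∀ ω, alpha j ω = (lvl f g P0 j ω).1 := fun ω =>
    (hcons j ω).1.trans (congrArg Prod.fst (hlow0 ω))
  have hlamP0 : ∀ ω, lam j ω = (lvl f g P0 j ω).2 := fun ω =>
    (hcons j ω).2.trans (congrArg Prod.snd (hlow0 ω))
  have haP1 : ∀ ω, alpha j ω = (lvl f g P1 j ω).1 := fun ω =>
    (hcons j ω).1.trans (congrArg Prod.fst (hlow1 ω))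
  have hlamP1 : ∀ ω, lam j ω = (lvl f g P1 j ω).2 := fun ω =>
    (hcons j ω).2.trans (congrArg Prod.snd (hlow1 ω))
  -- Simple functions w.r.t. m'
  have hSa : SimpleOn m' (alpha j) := by
    have h1 := (simpleOn_lvl (f := f) (g := g) m' P0 hQ0 j).comp Prod.fst
    have h2 : (fun ω => Prod.fst (lvl f g P0 j ω)) = alpha j := funext fun ω => (haP0 ω).symm
    rw [h2] at h1; exact h1
  have hSl : SimpleOn m' (lam j) := by
    have h1 := (simpleOn_lvl (f := f) (g := g) m' P0 hQ0 j).comp Prod.snd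
    have h2 : (fun ω => Prod.snd (lvl f g P0 j ω)) = lam j := funext fun ω => (hlamP0 ω).symm
    rw [h2] at h1; exact h1
  have hSW0 : SimpleOn m' (fun ω => 1 / max (cnt f g P0 t ω) 1) :=
    (simpleOn_cnt (f := f) (g := g) m' P0 hQ0 t).comp (fun x => 1 / max x 1)
  have hSW1 : SimpleOn m' (fun ω => 1 / max (cnt f g P1 t ω) 1) :=
    (simpleOn_cnt (f := f) (g := g) m' P1 hQ1 t).comp (fun x => 1 / max x 1)
  -- step 1 : pointwise identity relating the real process to the 0-hallucinated process
  have step1 : ∀ ω, (if P j ω ≤ alpha j ω then (1:ℝ) else 0) / max (cnt f g P t ω) 1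
      = (if P j ω ≤ alpha j ω then (1:ℝ) else 0) * (1 / max (cnt f g P0 t ω) 1) := by
    intro ω
    by_cases hc : P j ω ≤ alpha j ω
    · have hcnt0 : cnt f g P t ω = cnt f g P0 t ω := by
        refine cnt_congr_event (fun k hk => (congrFun (hP0k k hk) ω).symm) ?_ ?_ t
        · refine iff_of_true ?_ ?_
          · rw [← (hcons j ω).1]; exact hc
          · rw [hP0j ω, ← haP0 ω]; exact (ha01 j ω).1.le
        · refine iff_of_true ?_ ?_
          · rw [← (hcons j ω).2]; exact hc.trans (halam j ω)
          · rw [hP0j ω, ← hlamP0 ω]; exact (hl01 j ω).1.le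
      rw [hcnt0, div_eq_mul_one_div]
    · rw [if_neg hc, zero_div, zero_mul]
  -- step 3 : monotone comparison between the two hallucinated processes
  have step3 : ∀ ω, alpha j ω * (1 / max (cnt f g P0 t ω) 1)
      ≤ alpha j ω * (1 / max (cnt f g P1 t ω) 1) := by
    intro ω
    have hc : cnt f g P1 t ω ≤ cnt f g P0 t ω := by
      refine cnt_mono hfmono hgmono (fun k => ?_) t
      by_cases hk : k = j
      · subst hk; rw [hP0j ω, hP1j ω]; norm_num
      · rw [hP0k k hk, hP1k k hk]
    have hpos : (0:ℝ) < max (cnt f g P1 t ω) 1 :=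
      lt_of_lt_of_le one_pos (le_max_right _ _)
    refine mul_le_mul_of_nonneg_left ?_ (ha01 j ω).1.le
    exact one_div_le_one_div_of_le hpos (max_le_max hc le_rfl)
  -- step 5 : pointwise identity relating the 2-hallucinated process back to the real one
  have step5 : ∀ ω, alpha j ω * (if lam j ω < P j ω then (1:ℝ) else 0) / (1 - lam j ω)
        * (1 / max (cnt f g P1 t ω) 1)
      = alpha j ω * (if lam j ω < P j ω then (1:ℝ) else 0) / (1 - lam j ω)
        / max (cnt f g P t ω) 1 := by
    intro ω
    by_cases hc : lam j ω < P j ω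
    · have hcnt1 : cnt f g P t ω = cnt f g P1 t ω := by
        refine cnt_congr_event (fun k hk => (congrFun (hP1k k hk) ω).symm) ?_ ?_ t
        · refine iff_of_false ?_ ?_
          · rw [← (hcons j ω).1]
            exact not_le.2 (lt_of_le_of_lt (halam j ω) hc)
          · rw [hP1j ω, ← haP1 ω]
            exact not_le.2 ((ha01 j ω).2.trans one_lt_two)
        · refine iff_of_false ?_ ?_
          · rw [← (hcons j ω).2]; exact not_le.2 hc
          · rw [hP1j ω, ← hlamP1 ω]
            exact not_le.2 ((hl01 j ω).2.trans one_lt_two)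
      rw [hcnt1]; ring
    · simp [hc]
  -- assemble
  calc ∫⁻ ω, ENNReal.ofReal ((if P j ω ≤ alpha j ω then (1:ℝ) else 0)
          / max (cnt f g P t ω) 1) ∂μ
      = ∫⁻ ω, ENNReal.ofReal ((if P j ω ≤ alpha j ω then (1:ℝ) else 0)
          * (1 / max (cnt f g P0 t ω) 1)) ∂μ :=
        lintegral_congr fun ω => by rw [step1 ω]
    _ ≤ ∫⁻ ω, ENNReal.ofReal (alpha j ω * (1 / max (cnt f g P0 t ω) 1)) ∂μ := by
        refine keyA (m0 := m0) (μ := μ) hm' hPj hind hsup (alpha j) _ (hSa.prodMk hSW0)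
          (fun ω => ⟨(ha01 j ω).1.le, (ha01 j ω).2.le⟩) (fun ω => by positivity)
    _ ≤ ∫⁻ ω, ENNReal.ofReal (alpha j ω * (1 / max (cnt f g P1 t ω) 1)) ∂μ :=
        lintegral_mono fun ω => ENNReal.ofReal_le_ofReal (step3 ω)
    _ ≤ ∫⁻ ω, ENNReal.ofReal (alpha j ω * (if lam j ω < P j ω then (1:ℝ) else 0)
          / (1 - lam j ω) * (1 / max (cnt f g P1 t ω) 1)) ∂μ := by
        refine keyB (m0 := m0) (μ := μ) hm' hPj hind hsup (alpha j) (lam j) _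
          (hSa.prodMk (hSl.prodMk hSW1)) (fun ω => (ha01 j ω).1.le)
          (fun ω => ⟨(hl01 j ω).1.le, (hl01 j ω).2⟩) (fun ω => by positivity)
    _ = ∫⁻ ω, ENNReal.ofReal (alpha j ω * (if lam j ω < P j ω then (1:ℝ) else 0)
          / (1 - lam j ω) / max (cnt f g P t ω) 1) ∂μ :=
        lintegral_congr fun ω => by rw [step5 ω]

end Key

end Thm1d


/-- Theorem 1(d): if the null p-values are independent of each other and of the non-nulls,
each null p-value is super-uniform, both `{α_t}` and `{λ_t}` are monotone, and
`FDP̂_λ(t) ≤ α` almost surely for all `t`, then `FDR(t) ≤ α` for all `t`. -/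
theorem theorem1d {Ω : Type*} [m0 : MeasurableSpace Ω]
    (μ : Measure Ω) [IsProbabilityMeasure μ]
    (P alpha lam : ℕ → Ω → ℝ) (H0 : Set ℕ)
    (hPmeas : ∀ j, Measurable (P j)) (hP01 : ∀ j ω, P j ω ∈ Set.Icc (0 : ℝ) 1)
    (hameas : ∀ j, Measurable (alpha j)) (ha01 : ∀ j ω, alpha j ω ∈ Set.Ioo (0 : ℝ) 1)
    (hlmeas : ∀ j, Measurable (lam j)) (hl01 : ∀ j ω, lam j ω ∈ Set.Ioo (0 : ℝ) 1)
    (halam : ∀ j ω, alpha j ω ≤ lam j ω)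
    -- independence of the nulls from each other and from the non-nulls
    (hindep : nullsIndep μ H0 P)
    -- marginal super-uniformity of each null p-value
    (hnull : ∀ j ∈ H0, ∀ u ∈ Set.Icc (0 : ℝ) 1, μ {ω | P j ω ≤ u} ≤ ENNReal.ofReal u)
    -- predictability and monotonicity of the level and threshold sequences
    (f g : ℕ → (ℕ → Bool) × (ℕ → Bool) → ℝ)
    (hpreda : ∀ t ω, alpha t ω = f t (history P alpha lam t ω))
    (hpredl : ∀ t ω, lam t ω = g t (history P alpha lam t ω))
    (hfmono : ∀ t, Monotone (f t)) (hgmono : ∀ t, Monotone (g t))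
    -- target level and almost-sure control of the SAFFRON FDP estimate
    (q : ℝ) (hq : q ∈ Set.Ioo (0 : ℝ) 1)
    (hFDPhat : ∀ t : ℕ, ∀ᵐ ω ∂μ, FDPhatSaffron P alpha lam t ω ≤ q)
    (t : ℕ) :
    ∫ ω, FDP H0 P alpha t ω ∂μ ≤ q := by
    classical
  -- consistency of the abstract recursion with the given levels
  have hcons : ∀ i ω, alpha i ω = (Thm1d.lvl f g P i ω).1 ∧ lam i ω = (Thm1d.lvl f g P i ω).2 := by
    intro i
    induction i using Nat.strong_induction_on with
    | _ i IH =>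
      intro ω
      have hh : history P alpha lam i ω = Thm1d.hst f g P i ω := by
        unfold history Thm1d.hst
        refine Prod.ext ?_ ?_ <;>
        · funext k
          dsimp only
          by_cases hk : k < i
          · first
              | rw [(IH k hk ω).1]
              | rw [(IH k hk ω).2]
          · simp [hk]
      constructor
      · rw [hpreda i ω, hh, Thm1d.lvl_eq]
      · rw [hpredl i ω, hh, Thm1d.lvl_eq]
  have hcnt : ∀ ω, numRejections P alpha t ω = Thm1d.cnt f g P t ω := by
    intro ω
    unfold numRejections Thm1d.cnt
    exact Finset.sum_congr rfl fun k _ => by rw [(hcons k ω).1]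
  -- measurability facts
  have hχmeas : ∀ k : ℕ, Measurable
      (fun ω => if k ∈ H0 ∧ P k ω ≤ alpha k ω then (1:ℝ) else 0) := by
    intro k
    by_cases hk : k ∈ H0
    · have h : (fun ω => if k ∈ H0 ∧ P k ω ≤ alpha k ω then (1:ℝ) else 0)
          = fun ω => if P k ω ≤ alpha k ω then (1:ℝ) else 0 := by
        funext ω; by_cases hc : P k ω ≤ alpha k ω <;> simp [hk, hc]
      rw [h]
      exact Measurable.ite (measurableSet_le (hPmeas k) (hameas k))
        measurable_const measurable_const
    · have h : (fun ω => if k ∈ H0 ∧ P k ω ≤ alpha k ω then (1:ℝ) else 0)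
          = fun _ => (0:ℝ) := by
        funext ω; simp [hk]
      rw [h]; exact measurable_const
  have hψmeas : ∀ k : ℕ, Measurable
      (fun ω => alpha k ω * (if lam k ω < P k ω then (1:ℝ) else 0) / (1 - lam k ω)) :=
    fun k => ((hameas k).mul (Measurable.ite (measurableSet_lt (hlmeas k) (hPmeas k))
      measurable_const measurable_const)).div (measurable_const.sub (hlmeas k))
  have hmeasRej : Measurable (numRejections P alpha t) := by
    unfold numRejections
    exact Finset.measurable_sum _ fun k _ =>
      Measurable.ite (measurableSet_le (hPmeas k) (hameas k)) measurable_const measurable_const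
  have hmeasD : Measurable (fun ω => max (numRejections P alpha t ω) 1) :=
    hmeasRej.max measurable_const
  have hmeasNum : Measurable (numFalseRejections H0 P alpha t) := by
    unfold numFalseRejections
    exact Finset.measurable_sum _ fun k _ => hχmeas k
  have hmeasFDP : Measurable (FDP H0 P alpha t) := by
    unfold FDP
    exact hmeasNum.div hmeasD
  have hD1 : ∀ ω, (1:ℝ) ≤ max (numRejections P alpha t ω) 1 := fun ω => le_max_right _ _
  have hFDPnn : ∀ ω, 0 ≤ FDP H0 P alpha t ω := by
    intro ω
    unfold FDP numFalseRejections
    refine div_nonneg (Finset.sum_nonneg fun k _ => ?_) (zero_le_one.trans (hD1 ω))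
    split <;> norm_num
  have hψDnn : ∀ (k : ℕ) ω, 0 ≤ alpha k ω * (if lam k ω < P k ω then (1:ℝ) else 0)
      / (1 - lam k ω) / max (numRejections P alpha t ω) 1 := by
    intro k ω
    have h1 : (0:ℝ) < 1 - lam k ω := by linarith [(hl01 k ω).2]
    refine div_nonneg (div_nonneg (mul_nonneg (ha01 k ω).1.le ?_) h1.le)
      (zero_le_one.trans (hD1 ω))
    split <;> norm_num
  -- the independence package for each null index
  have hexists : ∀ j, j ∈ H0 → ∃ m' : MeasurableSpace Ω, m' ≤ m0 ∧
      (∀ (c : ℝ) (S : Set Ω), MeasurableSet[m'] S →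
        μ ({ω | P j ω ≤ c} ∩ S) = μ {ω | P j ω ≤ c} * μ S) ∧
      (∀ k, k ≠ j → Measurable[m'] (P k)) := by
    intro j hj
    set m : Option {i : ℕ // i ∈ H0} → MeasurableSpace Ω := fun i =>
      i.elim (⨆ k ∈ H0ᶜ, MeasurableSpace.comap (P k) inferInstance)
        (fun k => MeasurableSpace.comap (P k.1) inferInstance) with hmdef
    have hii : ProbabilityTheory.iIndep m μ := hindep
    have hmle : ∀ i, m i ≤ m0 := by
      intro i
      cases i with
      | none => exact iSup₂_le fun k _ => (hPmeas k).comap_le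
      | some k => exact (hPmeas k.1).comap_le
    set i0 : Option {i : ℕ // i ∈ H0} := some ⟨j, hj⟩ with hi0
    refine ⟨⨆ n ∈ ({i0} : Set (Option {i : ℕ // i ∈ H0}))ᶜ, m n,
      iSup₂_le fun n _ => hmle n, ?_, ?_⟩
    · have hbig := ProbabilityTheory.indep_biSup_compl hmle hii {i0}
      rw [iSup_singleton] at hbig
      have hfact := (ProbabilityTheory.Indep_iff _ _ μ).1 hbig
      intro c S hS
      exact hfact _ S ⟨Set.Iic c, measurableSet_Iic, rfl⟩ hS
    · intro k hk
      refine Measurable.of_comap_le ?_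
      by_cases hkH : k ∈ H0
      · have h1 : m (some ⟨k, hkH⟩) ≤ ⨆ n ∈ ({i0} : Set (Option {i : ℕ // i ∈ H0}))ᶜ, m n := by
          refine le_biSup m ?_
          simp only [hi0, Set.mem_compl_iff, Set.mem_singleton_iff, Option.some.injEq,
            Subtype.mk.injEq]
          exact hk
        exact h1
      · have h1 : MeasurableSpace.comap (P k) inferInstance ≤ m none :=
          le_biSup (fun k => MeasurableSpace.comap (P k) inferInstance) (hkH : k ∈ H0ᶜ)
        have h2 : m none ≤ ⨆ n ∈ ({i0} : Set (Option {i : ℕ // i ∈ H0}))ᶜ, m n :=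
          le_biSup m (by simp [hi0])
        exact h1.trans h2
  -- the per-index inequality
  have hkey : ∀ k ∈ Finset.Iic t,
      ∫⁻ ω, ENNReal.ofReal ((if k ∈ H0 ∧ P k ω ≤ alpha k ω then (1:ℝ) else 0)
          / max (numRejections P alpha t ω) 1) ∂μ
      ≤ ∫⁻ ω, ENNReal.ofReal (alpha k ω * (if lam k ω < P k ω then (1:ℝ) else 0)
          / (1 - lam k ω) / max (numRejections P alpha t ω) 1) ∂μ := by
    intro k _
    by_cases hkH : k ∈ H0
    · obtain ⟨m', hm', hind, hPkm⟩ := hexists k hkH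
      calc ∫⁻ ω, ENNReal.ofReal ((if k ∈ H0 ∧ P k ω ≤ alpha k ω then (1:ℝ) else 0)
              / max (numRejections P alpha t ω) 1) ∂μ
          = ∫⁻ ω, ENNReal.ofReal ((if P k ω ≤ alpha k ω then (1:ℝ) else 0)
              / max (Thm1d.cnt f g P t ω) 1) ∂μ := by
            refine lintegral_congr fun ω => ?_
            rw [hcnt ω, show (if k ∈ H0 ∧ P k ω ≤ alpha k ω then (1:ℝ) else 0)
              = (if P k ω ≤ alpha k ω then (1:ℝ) else 0) from
              if_congr (and_iff_right hkH) rfl rfl]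
        _ ≤ ∫⁻ ω, ENNReal.ofReal (alpha k ω * (if lam k ω < P k ω then (1:ℝ) else 0)
              / (1 - lam k ω) / max (Thm1d.cnt f g P t ω) 1) ∂μ :=
            Thm1d.perJ (m0 := m0) μ P alpha lam hfmono hgmono hcons ha01 hl01 halam k t
              (hPmeas k) (hnull k hkH) m' hm' hind hPkm
        _ = ∫⁻ ω, ENNReal.ofReal (alpha k ω * (if lam k ω < P k ω then (1:ℝ) else 0)
              / (1 - lam k ω) / max (numRejections P alpha t ω) 1) ∂μ :=
            lintegral_congr fun ω => by rw [hcnt ω]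
    · have h0 : (fun ω => ENNReal.ofReal ((if k ∈ H0 ∧ P k ω ≤ alpha k ω then (1:ℝ) else 0)
          / max (numRejections P alpha t ω) 1)) = fun _ => 0 := by
        funext ω; simp [hkH]
      rw [h0, lintegral_zero]
      exact zero_le
  -- convert the Bochner integral and conclude
  rw [integral_eq_lintegral_of_nonneg_ae (Filter.Eventually.of_forall hFDPnn)
    hmeasFDP.aestronglyMeasurable]
  refine le_trans (ENNReal.toReal_mono ENNReal.ofReal_ne_top ?_)
    (le_of_eq (ENNReal.toReal_ofReal hq.1.le))
  calc ∫⁻ ω, ENNReal.ofReal (FDP H0 P alpha t ω) ∂μ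
      = ∑ k ∈ Finset.Iic t, ∫⁻ ω, ENNReal.ofReal
          ((if k ∈ H0 ∧ P k ω ≤ alpha k ω then (1:ℝ) else 0)
            / max (numRejections P alpha t ω) 1) ∂μ := by
        rw [← lintegral_finset_sum _ (fun k _ => (show Measurable (fun ω => ENNReal.ofReal ((if k ∈ H0 ∧ P k ω ≤ alpha k ω then (1:ℝ) else 0) / max (numRejections P alpha t ω) 1)) from ((hχmeas k).div hmeasD).ennreal_ofReal))]
        refine lintegral_congr fun ω => ?_
        unfold FDP numFalseRejections
        rw [Finset.sum_div, ENNReal.ofReal_sum_of_nonneg]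
        intro k _
        refine div_nonneg ?_ (zero_le_one.trans (hD1 ω))
        split <;> norm_num
    _ ≤ ∑ k ∈ Finset.Iic t, ∫⁻ ω, ENNReal.ofReal
          (alpha k ω * (if lam k ω < P k ω then (1:ℝ) else 0)
            / (1 - lam k ω) / max (numRejections P alpha t ω) 1) ∂μ :=
        Finset.sum_le_sum hkey
    _ = ∫⁻ ω, ENNReal.ofReal (FDPhatSaffron P alpha lam t ω) ∂μ := by
        rw [← lintegral_finset_sum _ (fun k _ => (show Measurable (fun ω => ENNReal.ofReal (alpha k ω * (if lam k ω < P k ω then (1:ℝ) else 0) / (1 - lam k ω) / max (numRejections P alpha t ω) 1)) from ((hψmeas k).div hmeasD).ennreal_ofReal))]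
        refine lintegral_congr fun ω => ?_
        unfold FDPhatSaffron
        rw [Finset.sum_div, ENNReal.ofReal_sum_of_nonneg fun k _ => hψDnn k ω]
    _ ≤ ∫⁻ _, ENNReal.ofReal q ∂μ :=
        lintegral_mono_ae ((hFDPhat t).mono fun ω h => ENNReal.ofReal_le_ofReal h)
    _ = ENNReal.ofReal q := by simp
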